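/- Let G be a mixed graph whose underlying graph has girth s+1, let H_η(G) be its η-Hermitian adjacency matrix and A the ordinary adjacency matrix of the underlying graph. Then for each l ∈ {1,...,s}, the coefficient of λ^{n-l} in det(λI - H_η(G)) equals the coefficient of λ^{n-l} in det(λI - A), where n is the number of vertices. -/

import Mathlib

open Complex Function Polynomial



def mkWalk {V : Type} (G : SimpleGraph V) (f : ℕ → V)
    (h : ∀ j, G.Adj (f (j + 1)) (f j)) : (j : ℕ) → G.Walk (f j) (f 0)
  | 0 => SimpleGraph.Walk.nil
  | (j + 1) => SimpleGraph.Walk.cons (h j) (mkWalk G f h j)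

lemma mkWalk_support {V : Type} (G : SimpleGraph V) (f : ℕ → V)
    (h : ∀ j, G.Adj (f (j + 1)) (f j)) (j : ℕ) :
    (mkWalk G f h j).support = ((List.range (j + 1)).reverse).map f := by
  induction j with
  | zero => simp [mkWalk, List.range_succ]
  | succ j ih => simp [mkWalk, ih, List.range_succ]

lemma mkWalk_edges {V : Type} (G : SimpleGraph V) (f : ℕ → V)
    (h : ∀ j, G.Adj (f (j + 1)) (f j)) (j : ℕ) :
    (mkWalk G f h j).edges = ((List.range j).reverse).map (fun a => s(f (a + 1), f a)) := by
  induction j with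
  | zero => simp [mkWalk]
  | succ j ih => simp [mkWalk, ih, List.range_succ]

lemma mkWalk_length {V : Type} (G : SimpleGraph V) (f : ℕ → V)
    (h : ∀ j, G.Adj (f (j + 1)) (f j)) (j : ℕ) :
    (mkWalk G f h j).length = j := by
  induction j with
  | zero => rfl
  | succ j ih => simp [mkWalk, ih]

lemma perm_involution_of_no_short_cycle {V : Type} [Fintype V] [DecidableEq V]
    (G : SimpleGraph V) (s : ℕ)
    (hcyc : ∀ (a : V) (w : G.Walk a a), w.IsCycle → s + 1 ≤ w.length)
    (σ : Equiv.Perm V) (hcard : σ.support.card ≤ s)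
    (hadj : ∀ x ∈ σ.support, G.Adj (σ x) x) :
    ∀ x ∈ σ.support, σ (σ x) = x := by
  by_contra hcon
  push_neg at hcon
  obtain ⟨i, hi, hii⟩ := hcon
  set f : ℕ → V := fun a => (⇑σ)^[a] i with hf
  have hfpow : ∀ a, f a = (σ ^ a) i := by
    intro a
    rw [hf]
    exact (congrFun (Equiv.Perm.coe_pow σ a) i).symm
  have hfp : ∀ a, f a ∈ σ.support := by
    intro a
    rw [hfpow]
    exact Equiv.Perm.pow_apply_mem_support.mpr hi
  have hfs : ∀ a, f (a + 1) = σ (f a) := fun a => Function.iterate_succ_apply' _ _ _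
  have hper : i ∈ periodicPts ⇑σ := by
    refine ⟨orderOf σ, orderOf_pos σ, ?_⟩
    show (⇑σ)^[orderOf σ] i = i
    rw [← Equiv.Perm.coe_pow, pow_orderOf_eq_one]
    rfl
  set k := minimalPeriod ⇑σ i with hk
  have hk0 : 0 < k := minimalPeriod_pos_of_mem_periodicPts hper
  have hfk : f k = i := iterate_minimalPeriod
  have hinj : Set.InjOn f (Set.Iio k) := iterate_injOn_Iio_minimalPeriod
  have hne : ∀ a b : ℕ, a < k → b < k → a ≠ b → f a ≠ f b := by
    intro a b ha hb hab h
    exact hab (hinj (Set.mem_Iio.mpr ha) (Set.mem_Iio.mpr hb) h)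
  have hk3 : 3 ≤ k := by
    by_contra h
    have h1 : σ i ≠ i := Equiv.Perm.mem_support.mp hi
    interval_cases k
    · exact h1 (by simpa [hf] using hfk)
    · exact hii (by simpa [hfs 1, hfs 0, hf] using hfk)
  have hks : k ≤ σ.support.card := by
    have := Finset.card_le_card_of_injOn (s := Finset.range k) (t := σ.support) f
      (fun a _ => hfp a)
      (fun a ha b hb hab => hinj (Set.mem_Iio.mpr (by simpa using ha))
        (Set.mem_Iio.mpr (by simpa using hb)) hab)
    simpa using this
  clear_value k
  clear hk
  have hadj' : ∀ j, G.Adj (f (j + 1)) (f j) := fun j => by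
    rw [hfs]; exact hadj _ (hfp j)
  have hadjtop : G.Adj i (f (k - 1)) := by
    have h1 : f ((k - 1) + 1) = i := by
      rw [Nat.sub_add_cancel (by omega)]; exact hfk
    have h2 := hadj' (k - 1)
    rwa [h1] at h2
  have hf0 : f 0 = i := rfl
  let p : G.Walk (f (k - 1)) i := mkWalk G f hadj' (k - 1)
  have hpath : p.IsPath := by
    apply SimpleGraph.Walk.IsPath.mk'
    have hsup : p.support = ((List.range (k - 1 + 1)).reverse).map f := mkWalk_support G f hadj' (k - 1)
    rw [hsup]
    refine List.Nodup.map_on ?_ (by simp [List.nodup_range])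
    intro a ha b hb hab
    simp only [List.mem_reverse, List.mem_range] at ha hb
    by_contra hab'
    exact hne a b (by omega) (by omega) hab' hab
  have hedge : s(i, f (k - 1)) ∉ p.edges := by
    show s(i, f (k - 1)) ∉ (mkWalk G f hadj' (k - 1)).edges
    rw [mkWalk_edges]
    simp only [List.mem_map, List.mem_reverse, List.mem_range, not_exists, not_and]
    intro a ha h
    rw [Sym2.eq_iff] at h
    rcases h with ⟨h1, h2⟩ | ⟨h1, h2⟩
    · exact hne (a + 1) 0 (by omega) (by omega) (by omega) (h1.trans hf0.symm)
    · rcases Nat.eq_zero_or_pos a with rfl | ha0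
      · exact hne 1 (k - 1) (by omega) (by omega) (by omega) h1
      · exact hne a 0 (by omega) (by omega) (by omega) (h2.trans hf0.symm)
  let w : G.Walk i i := SimpleGraph.Walk.cons hadjtop p
  have hwcyc : w.IsCycle := by
    rw [SimpleGraph.Walk.cons_isCycle_iff]
    exact ⟨hpath, hedge⟩
  have hlen : w.length = k := by
    show (SimpleGraph.Walk.cons hadjtop p).length = k
    rw [SimpleGraph.Walk.length_cons, show p.length = k - 1 from mkWalk_length G f hadj' (k - 1)]
    omega
  have := hcyc i w hwcyc
  omega


lemma charpoly_coeff_zero_diag {V : Type} [Fintype V] [DecidableEq V] (M : Matrix V V ℂ)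
    (hd : ∀ i, M i i = 0) (l : ℕ) (hl : l ≤ Fintype.card V) :
    M.charpoly.coeff (Fintype.card V - l) =
      ∑ σ : Equiv.Perm V, Equiv.Perm.sign σ •
        (if σ.support.card = l then ∏ i ∈ σ.support, (-(M (σ i) i)) else 0) := by
  rw [Matrix.charpoly, Matrix.det_apply, Polynomial.finset_sum_coeff]
  refine Finset.sum_congr rfl fun σ _ => ?_
  rw [Polynomial.coeff_smul]
  congr 1
  have hprod : ∏ i, Matrix.charmatrix M (σ i) i
      = Polynomial.C (∏ i ∈ σ.support, (-(M (σ i) i))) *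
        Polynomial.X ^ (Fintype.card V - σ.support.card) := by
    rw [← Finset.prod_mul_prod_compl σ.support]
    congr 1
    · rw [map_prod]
      refine Finset.prod_congr rfl fun i hi => ?_
      rw [Matrix.charmatrix_apply_ne _ _ _ (Equiv.Perm.mem_support.mp hi), map_neg]
    · rw [Finset.prod_congr rfl (fun i hi => ?_), Finset.prod_const, Finset.card_compl]
      have h1 : σ i = i := Equiv.Perm.notMem_support.mp (Finset.mem_compl.mp hi)
      rw [h1, Matrix.charmatrix_apply_eq, hd, map_zero, sub_zero]
  rw [hprod, Polynomial.coeff_C_mul, Polynomial.coeff_X_pow]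
  have hcard := Finset.card_le_univ σ.support
  by_cases h : σ.support.card = l
  · simp [h]
  · have h2 : ¬ (Fintype.card V - l = Fintype.card V - σ.support.card) := by omega
    simp [h, h2]

theorem stmt_3 {V : Type} [Fintype V] [DecidableEq V] (η : ℝ)
    (A : V → V → Prop) [DecidableRel A] (hirr : ∀ x, ¬ A x x)
    (G : SimpleGraph V) [DecidableRel G.Adj]
    (hG : ∀ x y, G.Adj x y ↔ (x ≠ y ∧ (A x y ∨ A y x)))
    (H : Matrix V V ℂ)
    (hH : ∀ x y, H x y =
      if A x y ∧ A y x then 1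
      else if A x y then Complex.exp (η * Complex.I)
      else if A y x then Complex.exp (-(η : ℂ) * Complex.I)
      else 0)
    (s : ℕ) (hgirth : G.girth = (s + 1 : ℕ)) :
    ∀ l : ℕ, 1 ≤ l → l ≤ s →
      (Matrix.charpoly H).coeff (Fintype.card V - l) =
      (Matrix.charpoly (G.adjMatrix ℂ)).coeff (Fintype.card V - l) := by
  intro l hl1 hls
  -- basic facts from the girth hypothesis
  have hnac : ¬ G.IsAcyclic := by
    intro h
    rw [h.girth_eq_zero] at hgirth
    omega
  have hegirth : G.egirth = ((s + 1 : ℕ) : ℕ∞) := by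
    have htop : G.egirth ≠ ⊤ := SimpleGraph.egirth_eq_top.not.mpr hnac
    rw [← ENat.coe_toNat htop]
    exact_mod_cast congrArg (Nat.cast : ℕ → ℕ∞) hgirth
  have hcyc : ∀ (a : V) (w : G.Walk a a), w.IsCycle → s + 1 ≤ w.length := by
    intro a w hw
    have h1 : G.egirth ≤ (w.length : ℕ∞) := SimpleGraph.le_egirth.mp le_rfl a w hw
    rw [hegirth] at h1
    exact_mod_cast h1
  have hn : s + 1 ≤ Fintype.card V := by
    obtain ⟨a, w, hw, hlen⟩ := SimpleGraph.exists_girth_eq_length.mpr hnac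
    rw [hgirth] at hlen
    have h1 : w.support.tail.length = w.length := by
      have := SimpleGraph.Walk.length_support w
      have := (List.length_tail : w.support.tail.length = _)
      omega
    have h2 := List.Nodup.length_le_card hw.support_nodup
    omega
  -- diagonals vanish
  have hdH : ∀ i, H i i = 0 := by
    intro i
    rw [hH]
    simp [hirr i]
  have hdA : ∀ i : V, (G.adjMatrix ℂ) i i = 0 := fun i => by simp
  -- H x y * H y x = 1 whenever x,y adjacent
  have hmul : ∀ x y, G.Adj x y → H x y * H y x = 1 := by
    intro x y hxy
    obtain ⟨hne, hA⟩ := (hG x y).mp hxy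
    rw [hH x y, hH y x]
    by_cases h1 : A x y <;> by_cases h2 : A y x
    · simp [h1, h2]
    · simp only [h1, h2, and_false, if_false, if_true, and_true, true_and]
      rw [← Complex.exp_add]
      ring_nf
      exact Complex.exp_zero
    · simp only [h1, h2, false_and, and_false, if_false, if_true]
      rw [← Complex.exp_add]
      ring_nf
      exact Complex.exp_zero
    · tauto
  -- H x y = 0 when x ≠ y and not adjacent
  have hzero : ∀ x y, x ≠ y → ¬ G.Adj x y → H x y = 0 := by
    intro x y hne hnadj
    rw [hG] at hnadj
    push_neg at hnadj
    have := hnadj hne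
    rw [hH]
    simp [this.1, this.2]
  -- the key combinatorial lemma
  have key : ∀ σ : Equiv.Perm V, σ.support.card = l →
      ∏ i ∈ σ.support, (-(H (σ i) i)) =
      ∏ i ∈ σ.support, (-((G.adjMatrix ℂ) (σ i) i)) := by
    intro σ hcard
    by_cases hadj : ∀ x ∈ σ.support, G.Adj (σ x) x
    · have hinv := perm_involution_of_no_short_cycle G s hcyc σ (by omega) hadj
      rw [Finset.prod_involution (fun a _ => σ a)
          (fun a ha => ?_) (fun a ha _ => Equiv.Perm.mem_support.mp ha)
          (fun a ha => Equiv.Perm.apply_mem_support.mpr ha) (fun a ha => hinv a ha),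
        Finset.prod_involution (fun a _ => σ a)
          (fun a ha => ?_) (fun a ha _ => Equiv.Perm.mem_support.mp ha)
          (fun a ha => Equiv.Perm.apply_mem_support.mpr ha) (fun a ha => hinv a ha)]
      · rw [neg_mul_neg, hinv a ha]
        have h1 : G.Adj a (σ a) := (hadj a ha).symm
        simp [SimpleGraph.adjMatrix_apply, (hadj a ha), h1]
      · rw [neg_mul_neg, hinv a ha]
        exact hmul (σ a) a (hadj a ha)
    · push_neg at hadj
      obtain ⟨x, hx, hnadj⟩ := hadj
      rw [Finset.prod_eq_zero hx, Finset.prod_eq_zero hx]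
      · rw [neg_eq_zero]
        simp [SimpleGraph.adjMatrix_apply, hnadj]
      · rw [neg_eq_zero]
        exact hzero (σ x) x (Equiv.Perm.mem_support.mp hx) hnadj
  rw [charpoly_coeff_zero_diag H hdH l (by omega),
    charpoly_coeff_zero_diag _ hdA l (by omega)]
  refine Finset.sum_congr rfl fun σ _ => ?_
  congr 1
  by_cases hc : σ.support.card = l
  · rw [if_pos hc, if_pos hc, key σ hc]
  · rw [if_neg hc, if_neg hc]
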